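/- arXiv:1905.03160 — 2 statements merged into one kernel-verified Lean document; each statement's English description precedes it below -/
import Mathlib

section
/- Let K ≥ 1, let μ ∈ ℝ, let h be a standard complex Gaussian vector in ℂ^K, and set Q = I_K − (μ/‖h‖²) h h^H. Then E[Q] = ν I_K, where ν = 1 − μ/K and the expectation is entrywise. -/
open MeasureTheory ProbabilityTheory Matrix

noncomputable section

/-- `h : Ω → ℂ^K` is a standard complex Gaussian vector `CN(0, I_K)`:
its `K` entries are independent, and each entry has independent real and imaginary
parts distributed as real Gaussians `N(0, 1/2)`. -/
structure IsStdCGaussian {Ω : Type} [MeasureSpace Ω] {K : ℕ} (h : Ω → Fin K → ℂ) : Prop where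
  meas : Measurable h
  indepCoords : iIndepFun (fun k ω => h ω k) ℙ
  indepReIm : ∀ k, IndepFun (fun ω => (h ω k).re) (fun ω => (h ω k).im) ℙ
  lawRe : ∀ k, Measure.map (fun ω => (h ω k).re) ℙ = gaussianReal 0 (1/2)
  lawIm : ∀ k, Measure.map (fun ω => (h ω k).im) ℙ = gaussianReal 0 (1/2)

/-- `‖h‖²` for `h ∈ ℂ^K`. -/
def normSqVec {K : ℕ} (h : Fin K → ℂ) : ℝ := ∑ k, Complex.normSq (h k)

/-- The coordinate-descent update matrix `Q = I_K − (μ/‖h‖²) h hᴴ` associated with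
step parameter `μ ∈ ℝ` and channel vector `h ∈ ℂ^K`. -/
def Qmat {K : ℕ} (μ : ℝ) (h : Fin K → ℂ) : Matrix (Fin K) (Fin K) ℂ :=
  (1 : Matrix (Fin K) (Fin K) ℂ) -
    (((μ / normSqVec h : ℝ) : ℂ)) • Matrix.vecMulVec h (fun k => (starRingEnd ℂ) (h k))

namespace QmatAux

def G : Measure ℝ := gaussianReal 0 (1/2)

instance : IsProbabilityMeasure G := by unfold G; infer_instance

def ν : Measure ℂ := (G.prod G).map Complex.measurableEquivRealProd.symm

instance : IsProbabilityMeasure ν :=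
  Measure.isProbabilityMeasure_map (Complex.measurableEquivRealProd.symm.measurable.aemeasurable)

lemma mp_neg_G : MeasurePreserving (fun x : ℝ => -x) G G := by
  refine ⟨measurable_neg, ?_⟩
  have := gaussianReal_map_const_mul (μ := 0) (v := 1/2) (-1)
  have h2 : (⟨(-1:ℝ)^2, sq_nonneg _⟩ : NNReal) * (1/2) = 1/2 := by
    ext; norm_num
  simp only [neg_one_mul, mul_zero, h2] at this
  simpa [G] using this

lemma mp_neg_nu : MeasurePreserving (fun z : ℂ => -z) ν ν := by
  refine ⟨measurable_neg, ?_⟩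
  have hcomm : (fun z : ℂ => -z) ∘ (Complex.measurableEquivRealProd.symm)
      = Complex.measurableEquivRealProd.symm ∘ (Prod.map (fun x : ℝ => -x) (fun x : ℝ => -x)) := by
    funext p
    apply Complex.ext <;> simp [Complex.measurableEquivRealProd_symm_apply]
  rw [ν, Measure.map_map measurable_neg Complex.measurableEquivRealProd.symm.measurable, hcomm,
    ← Measure.map_map Complex.measurableEquivRealProd.symm.measurable
      (Measurable.prodMap measurable_neg measurable_neg),
    (mp_neg_G.prod mp_neg_G).map_eq]

lemma nu_singleton_zero : ν {0} = 0 := by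
  rw [ν, MeasurableEquiv.map_apply]
  have hset : Complex.measurableEquivRealProd.symm ⁻¹' {0} = ({0} : Set ℝ) ×ˢ ({0} : Set ℝ) := by
    ext p
    simp only [Set.mem_preimage, Set.mem_singleton_iff, Set.mem_prod,
      Complex.measurableEquivRealProd_symm_apply, Complex.ext_iff]
    constructor
    · rintro ⟨h1, h2⟩; exact ⟨h1, h2⟩
    · rintro ⟨h1, h2⟩; exact ⟨h1, h2⟩
  rw [hset, Measure.prod_prod]
  have hG0 : G {0} = 0 := by
    have hac := gaussianReal_absolutelyContinuous (0 : ℝ) (v := 1/2) (by norm_num)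
    exact hac (by simp)
  simp [hG0]

end QmatAux

open QmatAux

/-- For a standard complex Gaussian vector `h ∈ ℂ^K` (K ≥ 1), `μ ∈ ℝ`, and
`Q = I_K − (μ/‖h‖²) h hᴴ`, one has `E[Q] = ν I_K` with `ν = 1 − μ/K` (expectation entrywise). -/
theorem expectation_Qmat {Ω : Type} [MeasureSpace Ω]
    [IsProbabilityMeasure (ℙ : Measure Ω)] {K : ℕ} (hK : 1 ≤ K) (μ : ℝ)
    (h : Ω → Fin K → ℂ) (hg : IsStdCGaussian h) :
    Matrix.of (fun i j => ∫ ω, Qmat μ (h ω) i j)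
      = (((1 - μ / K : ℝ) : ℂ)) • (1 : Matrix (Fin K) (Fin K) ℂ) := by
  classical
  -- measurability of coordinates
  have hmeask : ∀ k, Measurable fun ω => h ω k := fun k => (measurable_pi_apply k).comp hg.meas
  -- law of each coordinate
  have law_coord : ∀ k, Measure.map (fun ω => h ω k) ℙ = ν := by
    intro k
    have hre : Measurable fun ω => (h ω k).re := Complex.measurable_re.comp (hmeask k)
    have him : Measurable fun ω => (h ω k).im := Complex.measurable_im.comp (hmeask k)
    have hpair : Measure.map (fun ω => ((h ω k).re, (h ω k).im)) ℙ = G.prod G := by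
      rw [(indepFun_iff_map_prod_eq_prod_map_map hre.aemeasurable him.aemeasurable).mp
        (hg.indepReIm k), hg.lawRe k, hg.lawIm k]
      rfl
    have hcomp : (fun ω => h ω k)
        = Complex.measurableEquivRealProd.symm ∘ (fun ω => ((h ω k).re, (h ω k).im)) := by
      funext ω
      exact (Complex.ext rfl rfl)
    rw [hcomp, ← Measure.map_map Complex.measurableEquivRealProd.symm.measurable
      (hre.prodMk him), hpair]
    rfl
  -- joint law is the product measure
  have joint : Measure.map h ℙ = Measure.pi (fun _ : Fin K => ν) := by
    symm
    refine Measure.pi_eq fun s hs => ?_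
    rw [Measure.map_apply hg.meas (MeasurableSet.univ_pi hs)]
    have hset : h ⁻¹' Set.pi Set.univ s = ⋂ k, (fun ω => h ω k) ⁻¹' s k := by
      ext ω; simp [Set.mem_pi]
    rw [hset, hg.indepCoords.meas_iInter (fun i => ⟨s i, hs i, rfl⟩)]
    refine Finset.prod_congr rfl fun k _ => ?_
    rw [← law_coord k, Measure.map_apply (hmeask k) (hs k)]
  set π : Measure (Fin K → ℂ) := Measure.pi (fun _ : Fin K => ν) with hπ
  haveI : IsProbabilityMeasure π := by rw [hπ]; infer_instance
  -- the normalized rank-one entries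
  set g : Fin K → Fin K → (Fin K → ℂ) → ℂ :=
    fun i j x => (((normSqVec x)⁻¹ : ℝ) : ℂ) * (x i * (starRingEnd ℂ) (x j)) with hgdef
  have hnormmeas : Measurable fun x : Fin K → ℂ => normSqVec x := by
    unfold normSqVec
    exact Finset.measurable_sum _ fun k _ =>
      Complex.continuous_normSq.measurable.comp (measurable_pi_apply k)
  have hgmeas : ∀ i j, Measurable (g i j) := by
    intro i j
    exact (Complex.measurable_ofReal.comp hnormmeas.inv).mul
      ((measurable_pi_apply i).mul (Complex.continuous_conj.measurable.comp (measurable_pi_apply j)))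
  have hS0 : ∀ x : Fin K → ℂ, 0 ≤ normSqVec x := fun x =>
    Finset.sum_nonneg fun k _ => Complex.normSq_nonneg _
  have hbound : ∀ i j x, ‖g i j x‖ ≤ 1 := by
    intro i j x
    have hnorm : ‖g i j x‖ = (normSqVec x)⁻¹ * (‖x i‖ * ‖x j‖) := by
      rw [hgdef]
      simp only [norm_mul, Complex.norm_real, RCLike.norm_conj,
        Real.norm_eq_abs, abs_of_nonneg (inv_nonneg.2 (hS0 x))]
    rcases eq_or_lt_of_le (hS0 x) with hz | hpos
    · have hx0 : x i = 0 := by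
        have : Complex.normSq (x i) ≤ 0 := by
          rw [hz]
          exact Finset.single_le_sum (f := fun k => Complex.normSq (x k))
            (fun k _ => Complex.normSq_nonneg _) (Finset.mem_univ i)
        have := le_antisymm this (Complex.normSq_nonneg _)
        exact Complex.normSq_eq_zero.mp this
      rw [hnorm, hx0]
      simp
    · have hsingle : ∀ k, Complex.normSq (x k) ≤ normSqVec x := fun k =>
        Finset.single_le_sum (f := fun k => Complex.normSq (x k))
          (fun k _ => Complex.normSq_nonneg _) (Finset.mem_univ k)
      have hi : ‖x i‖ ≤ Real.sqrt (normSqVec x) := by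
        rw [Real.le_sqrt (norm_nonneg _), Complex.sq_norm]
        · exact hsingle i
        · exact hS0 x
      have hj : ‖x j‖ ≤ Real.sqrt (normSqVec x) := by
        rw [Real.le_sqrt (norm_nonneg _), Complex.sq_norm]
        · exact hsingle j
        · exact hS0 x
      have hmul : ‖x i‖ * ‖x j‖ ≤ normSqVec x := by
        calc ‖x i‖ * ‖x j‖ ≤ Real.sqrt (normSqVec x) * Real.sqrt (normSqVec x) :=
              mul_le_mul hi hj (norm_nonneg _) (Real.sqrt_nonneg _)
          _ = normSqVec x := Real.mul_self_sqrt (hS0 x)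
      rw [hnorm]
      calc (normSqVec x)⁻¹ * (‖x i‖ * ‖x j‖) ≤ (normSqVec x)⁻¹ * normSqVec x :=
            mul_le_mul_of_nonneg_left hmul (inv_nonneg.2 (hS0 x))
        _ = 1 := inv_mul_cancel₀ (ne_of_gt hpos)
  have hint : ∀ {α : Type} [MeasurableSpace α] (μ' : Measure α) [IsProbabilityMeasure μ']
      (T : α → Fin K → ℂ) (hT : Measurable T) (i j : Fin K),
      Integrable (fun a => g i j (T a)) μ' := by
    intro α _ μ' _ T hT i j
    refine Integrable.mono' (integrable_const 1)
      (((hgmeas i j).comp hT).aestronglyMeasurable) ?_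
    exact Filter.Eventually.of_forall fun a => hbound i j (T a)
  -- the integrals over the product measure
  set I : Fin K → Fin K → ℂ := fun i j => ∫ x, g i j x ∂π with hI
  -- off-diagonal vanish
  have hoff : ∀ i j, i ≠ j → I i j = 0 := by
    intro i j hij
    set f : Fin K → ℂ → ℂ := fun k z => if k = i then -z else z with hf
    set T : (Fin K → ℂ) → (Fin K → ℂ) := fun x k => f k (x k) with hT
    have hTmp : MeasurePreserving T π π := by
      refine measurePreserving_pi _ _ fun k => ?_
      by_cases hk : k = i
      · simpa [hf, hk] using mp_neg_nu
      · simp only [hf, if_neg hk]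
        exact MeasurePreserving.id ν
    have hinv : Function.Involutive T := by
      intro x; funext k
      by_cases hk : k = i <;> simp [hT, hf, hk]
    let E : (Fin K → ℂ) ≃ᵐ (Fin K → ℂ) :=
      { toEquiv := hinv.toPerm T, measurable_toFun := hTmp.measurable,
        measurable_invFun := hTmp.measurable }
    have hcomp : ∀ x, g i j (T x) = - g i j x := by
      intro x
      have hnorms : normSqVec (T x) = normSqVec x := by
        unfold normSqVec
        refine Finset.sum_congr rfl fun k _ => ?_
        by_cases hk : k = i <;> simp [hT, hf, hk]
      rw [hgdef]
      simp only [hnorms]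
      have h1 : T x i = -(x i) := by simp [hT, hf]
      have h2 : T x j = x j := by simp [hT, hf, hij.symm]
      rw [h1, h2]
      ring
    have hIT : I i j = ∫ x, g i j (T x) ∂π :=
      (hTmp.integral_comp E.measurableEmbedding (g i j)).symm
    have hneg : (∫ x, g i j (T x) ∂π) = - I i j := by
      simp only [hcomp]
      rw [integral_neg]
    have : I i j = - I i j := hIT.trans hneg
    have h2 : (2 : ℂ) * I i j = 0 := by
      rw [two_mul]
      nth_rewrite 1 [this]
      ring
    have := mul_eq_zero.mp h2
    simpa using this
  -- diagonal entries are equal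
  have hdiag_eq : ∀ i j : Fin K, I i i = I j j := by
    intro i j
    set σ : Fin K ≃ Fin K := Equiv.swap i j with hσ
    set E : (Fin K → ℂ) ≃ᵐ (Fin K → ℂ) :=
      MeasurableEquiv.arrowCongr' σ (MeasurableEquiv.refl ℂ) with hE
    have hEmp : MeasurePreserving E π π :=
      measurePreserving_arrowCongr' (fun _ => ν) (fun _ => ν) σ (MeasurableEquiv.refl ℂ)
        (fun _ => ⟨measurable_id, Measure.map_id⟩)
    have hEapp : ∀ (x : Fin K → ℂ) (k : Fin K), E x k = x (σ k) := by
      intro x k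
      simp [hE, MeasurableEquiv.arrowCongr', Equiv.arrowCongr', Equiv.arrowCongr,
        hσ, Equiv.symm_swap]
    have hcomp : ∀ x, g i i (E x) = g j j x := by
      intro x
      have hnorms : normSqVec (E x) = normSqVec x := by
        unfold normSqVec
        rw [show (∑ k, Complex.normSq (E x k)) = ∑ k, Complex.normSq (x (σ k)) from
          Finset.sum_congr rfl fun k _ => by rw [hEapp]]
        exact Equiv.sum_comp σ fun k => Complex.normSq (x k)
      rw [hgdef]
      simp only [hnorms, hEapp, hσ, Equiv.swap_apply_left]
    have : I i i = ∫ x, g i i (E x) ∂π :=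
      (hEmp.integral_comp E.measurableEmbedding (g i i)).symm
    rw [this]
    simp only [hcomp]
    rfl
  -- sum of diagonal integrals is 1
  have hsum : ∑ i : Fin K, I i i = 1 := by
    have hIsum : ∑ i : Fin K, I i i = ∫ x, (∑ i : Fin K, g i i x) ∂π := by
      rw [integral_finset_sum]
      exact fun i _ => hint π id measurable_id i i
    rw [hIsum]
    have hzero : π {x | normSqVec x = 0} = 0 := by
      set i0 : Fin K := ⟨0, hK⟩
      set s : Fin K → Set ℂ := fun k => if k = i0 then {0} else Set.univ with hs
      refine measure_mono_null (s := {x | normSqVec x = 0}) (t := Set.pi Set.univ s) ?_ ?_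
      · intro x hx
        intro k _
        have hxk : Complex.normSq (x k) = 0 := by
          have hle : Complex.normSq (x k) ≤ 0 := by
            rw [← hx]
            exact Finset.single_le_sum (f := fun k => Complex.normSq (x k))
              (fun k _ => Complex.normSq_nonneg _) (Finset.mem_univ k)
          exact le_antisymm hle (Complex.normSq_nonneg _)
        rcases eq_or_ne k i0 with hk | hk
        · subst hk
          simp [hs, Complex.normSq_eq_zero.mp hxk]
        · simp [hs, hk]
      · rw [hπ, Measure.pi_pi]
        refine Finset.prod_eq_zero (Finset.mem_univ i0) ?_
        simp [hs, nu_singleton_zero]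
    have hae : (fun x => ∑ i : Fin K, g i i x) =ᵐ[π] fun _ => (1 : ℂ) := by
      refine Filter.eventuallyEq_of_mem (s := {x | normSqVec x ≠ 0}) ?_ ?_
      · rw [mem_ae_iff]
        simpa [Set.compl_setOf] using hzero
      · intro x hx
        simp only [Set.mem_setOf_eq] at hx
        have hmulconj : ∀ i, x i * (starRingEnd ℂ) (x i) = (Complex.normSq (x i) : ℂ) :=
          fun i => Complex.mul_conj (x i)
        simp only [hgdef, hmulconj]
        rw [← Finset.mul_sum]
        rw [show (∑ i, (Complex.normSq (x i) : ℂ)) = ((normSqVec x : ℝ) : ℂ) by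
          rw [normSqVec]; push_cast; ring]
        rw [← Complex.ofReal_mul, inv_mul_cancel₀ hx]
        simp
    rw [integral_congr_ae hae]
    simp
  -- diagonal value
  have hKne : (K : ℂ) ≠ 0 := by
    exact_mod_cast Nat.cast_ne_zero.mpr (by omega)
  have hdiag : ∀ i, I i i = (K : ℂ)⁻¹ := by
    intro i
    have : ∑ j : Fin K, I j j = (K : ℂ) * I i i := by
      rw [Finset.sum_congr rfl fun j _ => hdiag_eq j i]
      simp [mul_comm]
    rw [this] at hsum
    field_simp at hsum ⊢
    linear_combination hsum
  -- transfer the integrals from Ω to π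
  have htrans : ∀ i j, (∫ ω, g i j (h ω) ∂ℙ) = I i j := by
    intro i j
    rw [← integral_map hg.meas.aemeasurable ((hgmeas i j).aestronglyMeasurable), joint]
  -- entrywise computation of Qmat
  have hentry : ∀ (x : Fin K → ℂ) i j,
      Qmat μ x i j = (if i = j then 1 else 0) - (μ : ℂ) * g i j x := by
    intro x i j
    rw [Qmat]
    simp only [Matrix.sub_apply, Matrix.smul_apply, Matrix.one_apply, Matrix.vecMulVec_apply,
      smul_eq_mul, hgdef]
    rw [div_eq_mul_inv]
    push_cast
    ring
  ext i j
  rw [Matrix.of_apply]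
  have hQint : (∫ ω, Qmat μ (h ω) i j)
      = (if i = j then 1 else 0) - (μ : ℂ) * I i j := by
    have h1 : (fun ω => Qmat μ (h ω) i j)
        = fun ω => (if i = j then (1:ℂ) else 0) - (μ : ℂ) * g i j (h ω) := by
      funext ω; exact hentry (h ω) i j
    rw [h1, integral_sub (integrable_const _)
      (((hint ℙ h hg.meas i j)).const_mul _), integral_const, integral_const_mul, htrans]
    simp
  rw [hQint]
  by_cases hij : i = j
  · subst hij
    rw [hdiag i]
    simp only [if_pos rfl, Matrix.smul_apply, Matrix.one_apply_eq, smul_eq_mul, mul_one]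
    push_cast [div_eq_mul_inv]
    ring
  · rw [hoff i j hij]
    simp [Matrix.one_apply_ne hij, hij]
end
end

section
/- Fix μ ∈ (0,2) and an integer c ≥ 1. For K ≥ 2 and M = cK, let SIR(K) = ( 1 − 2ν_K^{cK} + α_K^{cK}(1 − 1/K) + ε_K^{cK}(1/K) ) / ( (1 − 1/K)(ε_K^{cK} − α_K^{cK}) ), where ν_K = 1 − μ/K, α_K = 1 − 2μ/K + μ²/(K(K+1)), ε_K = 1 − 2μ/K + μ²/K. Then as K → ∞, SIR(K) converges to ( 1 − 2 e^{−μc} + e^{−2μc} ) / ( e^{−2μc} ( e^{μ²c} − 1 ) ). In particular ν_K^{cK} → e^{−μc}, α_K^{cK} → e^{−2μc}, and ε_K^{cK} → e^{−μ(2−μ)c}. -/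
open Filter Real

lemma pow_mul_tendsto_exp (f : ℕ → ℝ) (t : ℝ) (ht : t ≠ 0)
    (h : Tendsto (fun K : ℕ => (K : ℝ) * (f K - 1)) atTop (nhds t)) (c : ℕ) :
    Tendsto (fun K : ℕ => f K ^ (c * K)) atTop (nhds (Real.exp (c * t))) := by
  have hx0 : Tendsto (fun K : ℕ => f K - 1) atTop (nhds 0) := by
    have h2 := h.mul tendsto_one_div_atTop_nhds_zero_nat
    rw [mul_zero] at h2
    apply h2.congr'
    filter_upwards [eventually_ge_atTop 1] with K hK
    have hK0 : (K:ℝ) ≠ 0 := by positivity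
    field_simp
  have hf1 : Tendsto f atTop (nhds 1) := by
    have := hx0.add_const 1
    simpa using this
  have hne : ∀ᶠ K : ℕ in atTop, f K ≠ 1 := by
    filter_upwards [h.eventually_ne ht] with K hK hf
    apply hK; rw [hf]; ring
  have hslope : Tendsto (fun y : ℝ => Real.log y / (y - 1)) (nhdsWithin 1 {(1:ℝ)}ᶜ) (nhds 1) := by
    have hd := Real.hasDerivAt_log (one_ne_zero)
    rw [hasDerivAt_iff_tendsto_slope] at hd
    simpa [slope_fun_def, Real.log_one, div_eq_inv_mul] using hd
  have htf : Tendsto f atTop (nhdsWithin 1 {(1:ℝ)}ᶜ) := by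
    rw [tendsto_nhdsWithin_iff]
    exact ⟨hf1, hne.mono fun K hK => hK⟩
  have hlog : Tendsto (fun K : ℕ => (K:ℝ) * Real.log (f K)) atTop (nhds t) := by
    have h2 := h.mul (hslope.comp htf)
    rw [mul_one] at h2
    apply h2.congr'
    filter_upwards [hne] with K hK
    have : f K - 1 ≠ 0 := sub_ne_zero.mpr hK
    simp only [Function.comp]
    field_simp
  have hexp := (Real.continuous_exp.tendsto _).comp (hlog.const_mul (c:ℝ))
  apply hexp.congr'
  filter_upwards [hf1.eventually (eventually_gt_nhds one_pos)] with K hK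
  simp only [Function.comp]
  have hcast : ((c * K : ℕ) : ℝ) * Real.log (f K) = (c:ℝ) * ((K:ℝ) * Real.log (f K)) := by
    push_cast; ring
  rw [← hcast, Real.exp_nat_mul, Real.exp_log hK]

/-- Fix `μ ∈ (0,2)` and an integer `c ≥ 1`. For `K ≥ 2` and `M = cK`, let
`SIR(K)` be the closed-form coordinate-descent SIR with constants `ν_K = 1 − μ/K`,
`α_K = 1 − 2μ/K + μ²/(K(K+1))`, `ε_K = 1 − 2μ/K + μ²/K`. Then as `K → ∞`,
`ν_K^{cK} → e^{−μc}`, `α_K^{cK} → e^{−2μc}`, `ε_K^{cK} → e^{−μ(2−μ)c}`, and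
`SIR(K) → (1 − 2e^{−μc} + e^{−2μc}) / (e^{−2μc}(e^{μ²c} − 1))`. -/
theorem sir_large_system_limit (μ : ℝ) (hμ : μ ∈ Set.Ioo (0 : ℝ) 2) (c : ℕ) (hc : 1 ≤ c) :
    Tendsto (fun K : ℕ => (1 - μ / K) ^ (c * K)) atTop (nhds (Real.exp (-(μ * c)))) ∧
    Tendsto (fun K : ℕ => (1 - 2 * μ / K + μ ^ 2 / (K * (K + 1))) ^ (c * K)) atTop
      (nhds (Real.exp (-(2 * μ * c)))) ∧
    Tendsto (fun K : ℕ => (1 - 2 * μ / K + μ ^ 2 / K) ^ (c * K)) atTop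
      (nhds (Real.exp (-(μ * (2 - μ) * c)))) ∧
    Tendsto (fun K : ℕ =>
        (1 - 2 * (1 - μ / K) ^ (c * K)
          + (1 - 2 * μ / K + μ ^ 2 / (K * (K + 1))) ^ (c * K) * (1 - 1 / (K : ℝ))
          + (1 - 2 * μ / K + μ ^ 2 / K) ^ (c * K) * (1 / (K : ℝ))) /
        ((1 - 1 / (K : ℝ)) *
          ((1 - 2 * μ / K + μ ^ 2 / K) ^ (c * K)
            - (1 - 2 * μ / K + μ ^ 2 / (K * (K + 1))) ^ (c * K))))
      atTop
      (nhds ((1 - 2 * Real.exp (-(μ * c)) + Real.exp (-(2 * μ * c))) /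
        (Real.exp (-(2 * μ * c)) * (Real.exp (μ ^ 2 * c) - 1)))) := by
  obtain ⟨hμ0, hμ2⟩ := hμ
  have hμne : μ ≠ 0 := ne_of_gt hμ0
  have hc' : (1:ℝ) ≤ (c:ℝ) := by exact_mod_cast hc
  -- ν limit
  have hA : Tendsto (fun K : ℕ => (1 - μ / K) ^ (c * K)) atTop
      (nhds (Real.exp (-(μ * c)))) := by
    have h0 : Tendsto (fun K : ℕ => (K:ℝ) * ((1 - μ / K) - 1)) atTop (nhds (-μ)) := by
      apply tendsto_const_nhds.congr'
      filter_upwards [eventually_ge_atTop 1] with K hK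
      have hK0 : (K:ℝ) ≠ 0 := by positivity
      field_simp
      ring
    have := pow_mul_tendsto_exp _ _ (neg_ne_zero.mpr hμne) h0 c
    have harg : (c:ℝ) * (-μ) = -(μ * c) := by ring
    rwa [harg] at this
  -- α limit
  have hB : Tendsto (fun K : ℕ => (1 - 2 * μ / K + μ ^ 2 / (K * (K + 1))) ^ (c * K)) atTop
      (nhds (Real.exp (-(2 * μ * c)))) := by
    have h0 : Tendsto (fun K : ℕ => (K:ℝ) * ((1 - 2 * μ / K + μ ^ 2 / ((K:ℝ) * (K + 1))) - 1))
        atTop (nhds (-(2*μ))) := by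
      have h1 := (tendsto_one_div_add_atTop_nhds_zero_nat).const_mul (μ^2)
      have h2 := h1.const_add (-(2*μ))
      rw [mul_zero, add_zero] at h2
      apply h2.congr'
      filter_upwards [eventually_ge_atTop 1] with K hK
      have hK0 : (K:ℝ) ≠ 0 := by positivity
      have hK1 : (K:ℝ) + 1 ≠ 0 := by positivity
      field_simp
      ring
    have htB : -(2*μ) ≠ 0 := by simp [hμne]
    have := pow_mul_tendsto_exp _ _ htB h0 c
    have harg : (c:ℝ) * (-(2*μ)) = -(2 * μ * c) := by ring
    rwa [harg] at this
  -- ε limit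
  have hE : Tendsto (fun K : ℕ => (1 - 2 * μ / K + μ ^ 2 / K) ^ (c * K)) atTop
      (nhds (Real.exp (-(μ * (2 - μ) * c)))) := by
    have h0 : Tendsto (fun K : ℕ => (K:ℝ) * ((1 - 2 * μ / K + μ ^ 2 / K) - 1))
        atTop (nhds (μ^2 - 2*μ)) := by
      apply tendsto_const_nhds.congr'
      filter_upwards [eventually_ge_atTop 1] with K hK
      have hK0 : (K:ℝ) ≠ 0 := by positivity
      field_simp
      ring
    have htE : μ^2 - 2*μ ≠ 0 := by
      intro h
      have : μ * (μ - 2) = 0 := by nlinarith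
      rcases mul_eq_zero.mp this with h' | h'
      · exact hμne h'
      · linarith
    have := pow_mul_tendsto_exp _ _ htE h0 c
    have harg : (c:ℝ) * (μ^2 - 2*μ) = -(μ * (2 - μ) * c) := by ring
    rwa [harg] at this
  refine ⟨hA, hB, hE, ?_⟩
  -- SIR limit
  set A := Real.exp (-(μ * (c:ℝ))) with hAdef
  set B := Real.exp (-(2 * μ * (c:ℝ))) with hBdef
  set E := Real.exp (-(μ * (2 - μ) * (c:ℝ))) with hEdef
  have hk0 : Tendsto (fun K : ℕ => 1 / (K:ℝ)) atTop (nhds 0) :=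
    tendsto_one_div_atTop_nhds_zero_nat
  have hk1 : Tendsto (fun K : ℕ => 1 - 1 / (K:ℝ)) atTop (nhds 1) := by
    have := hk0.const_sub 1
    simpa using this
  have hone : Tendsto (fun _ : ℕ => (1:ℝ)) atTop (nhds 1) := tendsto_const_nhds
  have hnum := ((hone.sub (hA.const_mul 2)).add (hB.mul hk1)).add (hE.mul hk0)
  have hden := hk1.mul (hE.sub hB)
  have hEB : E - B ≠ 0 := by
    have : E ≠ B := by
      rw [hEdef, hBdef, Ne, Real.exp_eq_exp]
      intro h
      have hμ2c : μ^2 * (c:ℝ) = 0 := by nlinarith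
      have : μ^2 * (c:ℝ) > 0 := by positivity
      linarith
    exact sub_ne_zero.mpr this
  have hdne : (1:ℝ) * (E - B) ≠ 0 := by simpa using hEB
  have hquot := hnum.div hden hdne
  have hval : ((1:ℝ) - 2 * A + B) / (B * (Real.exp (μ ^ 2 * (c:ℝ)) - 1)) =
      ((1:ℝ) - 2 * A + B * 1 + E * 0) / (1 * (E - B)) := by
    have hEB' : E - B = B * (Real.exp (μ ^ 2 * (c:ℝ)) - 1) := by
      rw [mul_sub, mul_one, hBdef, hEdef, ← Real.exp_add]
      congr 1
      ring
    rw [mul_one, mul_zero, add_zero, one_mul, hEB']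
  rw [hval]
  exact hquot
end
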